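/- For every ℓ ∈ [n], if Q is a subset of [n] of size ℓ chosen uniformly at random among all such subsets, then the expected optimal fractional assignment value of the items in Q satisfies E[v(x̃(Q))] ≥ (ℓ/n) · v(x*), where x* is an optimal integral feasible assignment of the full instance. -/

import Mathlib

/-- The value `v(x) = Σ_i Σ_j v_{i,j} x_{i,j}` of an assignment. -/
def gapVal (m n : ℕ) (v : Fin m → Fin n → ℝ) (x : Fin m → Fin n → ℝ) : ℝ :=
  ∑ i, ∑ j, v i j * x i j

/-- `x` is a feasible fractional assignment of the items in `Q`: all entries are
nonnegative, every bin respects its capacity, every item is assigned at most once,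
and only items of `Q` are assigned. -/
def gapFeasibleOn (m n : ℕ) (C : Fin m → ℝ) (s : Fin m → Fin n → ℝ)
    (x : Fin m → Fin n → ℝ) (Q : Finset (Fin n)) : Prop :=
  (∀ i j, 0 ≤ x i j) ∧
  (∀ i, ∑ j, s i j * x i j ≤ C i) ∧
  (∀ j, ∑ i, x i j ≤ 1) ∧
  (∀ i j, j ∉ Q → x i j = 0)

/-- `x` is an integral (0/1) assignment. -/
def gapIntegral (m n : ℕ) (x : Fin m → Fin n → ℝ) : Prop :=
  ∀ i j, x i j = 0 ∨ x i j = 1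

lemma count_mem_powersetCard (n ℓ : ℕ) (hℓ1 : 1 ≤ ℓ) (j : Fin n) :
    ((Finset.powersetCard ℓ (Finset.univ : Finset (Fin n))).filter (fun Q => j ∈ Q)).card
      = (n - 1).choose (ℓ - 1) := by
  have h : ((Finset.univ : Finset (Fin n)).erase j).card = n - 1 := by
    rw [Finset.card_erase_of_mem (Finset.mem_univ j), Finset.card_univ, Fintype.card_fin]
  rw [← h, ← Finset.card_powersetCard]
  apply Finset.card_nbij' (fun Q => Q.erase j) (fun T => insert j T)
  · intro Q hQ
    simp only [Finset.mem_coe, Finset.mem_filter, Finset.mem_powersetCard] at hQ ⊢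
    obtain ⟨⟨_, hcard⟩, hjQ⟩ := hQ
    refine ⟨fun x hx => ?_, ?_⟩
    · simp only [Finset.mem_erase] at hx ⊢
      exact ⟨hx.1, Finset.mem_univ _⟩
    · rw [Finset.card_erase_of_mem hjQ, hcard]
  · intro T hT
    simp only [Finset.mem_coe, Finset.mem_powersetCard] at hT
    obtain ⟨hsub, hcard⟩ := hT
    have hjT : j ∉ T := fun hj => (Finset.mem_erase.mp (hsub hj)).1 rfl
    simp only [Finset.mem_coe, Finset.mem_filter, Finset.mem_powersetCard]
    refine ⟨⟨Finset.subset_univ _, ?_⟩, Finset.mem_insert_self _ _⟩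
    rw [Finset.card_insert_of_notMem hjT, hcard]
    omega
  · intro Q hQ
    simp only [Finset.mem_coe, Finset.mem_filter] at hQ
    exact Finset.insert_erase hQ.2
  · intro T hT
    simp only [Finset.mem_coe, Finset.mem_powersetCard] at hT
    have hjT : j ∉ T := fun hj => (Finset.mem_erase.mp (hT.1 hj)).1 rfl
    exact Finset.erase_insert hjT

/-- For every `ℓ ∈ [n]`, if `Q` is a uniformly random subset of `[n]`
of size `ℓ`, then the expected value of an optimal fractional assignment `x̃(Q)` of the
items in `Q` satisfies `E[v(x̃(Q))] ≥ (ℓ/n) · v(x*)`, where `x*` is an optimal integral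
feasible assignment of the full instance. -/
theorem gap_sampled_fractional_value
    (m n : ℕ) (C : Fin m → ℝ) (hC : ∀ i, 0 < C i)
    (s v : Fin m → Fin n → ℝ)
    (hs : ∀ i j, 0 < s i j ∧ s i j ≤ C i) (hv : ∀ i j, 0 < v i j)
    (xstar : Fin m → Fin n → ℝ)
    (hstar : gapFeasibleOn m n C s xstar Finset.univ ∧ gapIntegral m n xstar ∧
      (∀ y, gapFeasibleOn m n C s y Finset.univ → gapIntegral m n y →
        gapVal m n v y ≤ gapVal m n v xstar))
    (xt : Finset (Fin n) → Fin m → Fin n → ℝ)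
    (hxt : ∀ Q : Finset (Fin n), gapFeasibleOn m n C s (xt Q) Q ∧
      (∀ y, gapFeasibleOn m n C s y Q → gapVal m n v y ≤ gapVal m n v (xt Q)))
    (ℓ : ℕ) (hℓ1 : 1 ≤ ℓ) (hℓ2 : ℓ ≤ n) :
    (∑ Q ∈ Finset.powersetCard ℓ (Finset.univ : Finset (Fin n)), gapVal m n v (xt Q))
        / ((Finset.powersetCard ℓ (Finset.univ : Finset (Fin n))).card : ℝ)
      ≥ ((ℓ : ℝ) / (n : ℝ)) * gapVal m n v xstar := by
  obtain ⟨⟨hpos, hcap, hitem, _⟩, _, _⟩ := hstar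
  set N := Finset.powersetCard ℓ (Finset.univ : Finset (Fin n)) with hN
  set r : Finset (Fin n) → Fin m → Fin n → ℝ :=
    fun Q i j => if j ∈ Q then xstar i j else 0 with hr
  have hfeas : ∀ Q, gapFeasibleOn m n C s (r Q) Q := by
    intro Q
    refine ⟨fun i j => ?_, fun i => ?_, fun j => ?_, fun i j hj => ?_⟩
    · by_cases h : j ∈ Q <;> simp [hr, h, hpos i j]
    · calc ∑ j, s i j * r Q i j ≤ ∑ j, s i j * xstar i j := by
            apply Finset.sum_le_sum
            intro j _
            by_cases h : j ∈ Q
            · simp [hr, h]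
            · simp only [hr, h, if_false, mul_zero]
              exact mul_nonneg (le_of_lt (hs i j).1) (hpos i j)
          _ ≤ C i := hcap i
    · calc ∑ i, r Q i j ≤ ∑ i, xstar i j := by
            apply Finset.sum_le_sum
            intro i _
            by_cases h : j ∈ Q <;> simp [hr, h, hpos i j]
          _ ≤ 1 := hitem j
    · simp [hr, hj]
  have hcardN : (N.card : ℝ) = (n.choose ℓ : ℝ) := by
    rw [hN, Finset.card_powersetCard, Finset.card_univ, Fintype.card_fin]
  have step : ∀ (i : Fin m) (j : Fin n),
      ∑ Q ∈ N, (if j ∈ Q then v i j * xstar i j else 0)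
        = ((n-1).choose (ℓ-1) : ℝ) * (v i j * xstar i j) := by
    intro i j
    rw [← Finset.sum_filter, Finset.sum_const, count_mem_powersetCard n ℓ hℓ1 j, nsmul_eq_mul]
  have key : ((n-1).choose (ℓ-1) : ℝ) * gapVal m n v xstar
      ≤ ∑ Q ∈ N, gapVal m n v (xt Q) := by
    have h1 : ∀ Q ∈ N, gapVal m n v (r Q) ≤ gapVal m n v (xt Q) := fun Q _ =>
      (hxt Q).2 (r Q) (hfeas Q)
    calc ((n-1).choose (ℓ-1) : ℝ) * gapVal m n v xstar
        = ∑ Q ∈ N, gapVal m n v (r Q) := by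
          have e1 : ∑ Q ∈ N, gapVal m n v (r Q)
              = ∑ Q ∈ N, ∑ i, ∑ j, (if j ∈ Q then v i j * xstar i j else 0) := by
            apply Finset.sum_congr rfl; intro Q _
            unfold gapVal
            apply Finset.sum_congr rfl; intro i _
            apply Finset.sum_congr rfl; intro j _
            simp only [hr, mul_ite, mul_zero]
          rw [e1, Finset.sum_comm]
          have e2 : ∀ i : Fin m, ∑ Q ∈ N, ∑ j, (if j ∈ Q then v i j * xstar i j else 0)
              = ∑ j, ((n-1).choose (ℓ-1) : ℝ) * (v i j * xstar i j) := by
            intro i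
            rw [Finset.sum_comm]
            exact Finset.sum_congr rfl (fun j _ => step i j)
          rw [Finset.sum_congr rfl (fun i _ => e2 i)]
          unfold gapVal
          rw [Finset.mul_sum]
          exact (Finset.sum_congr rfl (fun i _ => (Finset.mul_sum _ _ _).symm)).symm
      _ ≤ ∑ Q ∈ N, gapVal m n v (xt Q) := Finset.sum_le_sum h1
  have hnpos : (0:ℝ) < n := by
    have : 0 < n := lt_of_lt_of_le hℓ1 hℓ2
    exact_mod_cast this
  have hcpos : (0:ℝ) < (N.card : ℝ) := by
    rw [hcardN]
    exact_mod_cast Nat.choose_pos hℓ2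
  have hid : (ℓ:ℝ) / n * (N.card : ℝ) = ((n-1).choose (ℓ-1) : ℝ) := by
    rw [hcardN]
    have h := Nat.add_one_mul_choose_eq (n-1) (ℓ-1)
    have h1 : n - 1 + 1 = n := by omega
    have h2 : ℓ - 1 + 1 = ℓ := by omega
    simp only [Nat.succ_eq_add_one, h1, h2] at h
    have h' : (n : ℝ) * ((n-1).choose (ℓ-1) : ℝ) = (n.choose ℓ : ℝ) * (ℓ : ℝ) := by
      exact_mod_cast h
    field_simp
    linarith
  rw [ge_iff_le, le_div_iff₀ hcpos]
  calc (ℓ:ℝ) / n * gapVal m n v xstar * (N.card : ℝ)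
      = ((ℓ:ℝ) / n * (N.card : ℝ)) * gapVal m n v xstar := by ring
    _ = ((n-1).choose (ℓ-1) : ℝ) * gapVal m n v xstar := by rw [hid]
    _ ≤ ∑ Q ∈ N, gapVal m n v (xt Q) := key
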